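/- For every A ∈ H and a ∈ 𝐂 one has δ(e,(A,a)) ≥ d(e,(A,a)) ≥ ‖A‖_H, and moreover δ(e,(A,0)) = d(e,(A,0)) = ‖A‖_H. -/

import Mathlib

open MeasureTheory
open scoped ENNReal

/-- The length of the `C¹` path `s ↦ (w s, c s)`, `0 ≤ s ≤ 1`, with respect to the
left invariant Riemannian metric on the Heisenberg type group determined by `ω`. -/
noncomputable def pathLen {H C : Type*} [NormedAddCommGroup H] [InnerProductSpace ℝ H]
    [NormedAddCommGroup C] [InnerProductSpace ℝ C]
    (ω : H →L[ℝ] H →L[ℝ] C) (w : ℝ → H) (c : ℝ → C) : ℝ :=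
  ∫ s in (0:ℝ)..1,
    Real.sqrt (‖deriv w s‖ ^ 2 + ‖deriv c s - (2:ℝ)⁻¹ • ω (w s) (deriv w s)‖ ^ 2)

/-- The left invariant Riemannian distance on `𝔤_CM = H × 𝐂`. -/
noncomputable def dCM {H C : Type*} [NormedAddCommGroup H] [InnerProductSpace ℝ H]
    [NormedAddCommGroup C] [InnerProductSpace ℝ C]
    (ω : H →L[ℝ] H →L[ℝ] C) (x y : H × C) : ℝ :=
  sInf {L : ℝ | ∃ w : ℝ → H, ∃ c : ℝ → C, ContDiff ℝ 1 w ∧ ContDiff ℝ 1 c ∧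
    w 0 = x.1 ∧ c 0 = x.2 ∧ w 1 = y.1 ∧ c 1 = y.2 ∧ L = pathLen ω w c}

/-- The horizontal (Carnot–Carathéodory) distance on `𝔤_CM = H × 𝐂`, with value `∞` if no
horizontal `C¹` path joins `x` to `y`. -/
noncomputable def dCC {H C : Type*} [NormedAddCommGroup H] [InnerProductSpace ℝ H]
    [NormedAddCommGroup C] [InnerProductSpace ℝ C]
    (ω : H →L[ℝ] H →L[ℝ] C) (x y : H × C) : ℝ≥0∞ :=
  ⨅ (w : ℝ → H) (c : ℝ → C) (_ : ContDiff ℝ 1 w) (_ : ContDiff ℝ 1 c)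
    (_ : ∀ s ∈ Set.Icc (0:ℝ) 1, deriv c s = (2:ℝ)⁻¹ • ω (w s) (deriv w s))
    (_ : w 0 = x.1) (_ : c 0 = x.2) (_ : w 1 = y.1) (_ : c 1 = y.2),
    ENNReal.ofReal (∫ s in (0:ℝ)..1, ‖deriv w s‖)


section aux
variable {H C : Type*} [NormedAddCommGroup H] [InnerProductSpace ℝ H]
    [NormedAddCommGroup C] [InnerProductSpace ℝ C]
    (ω : H →L[ℝ] H →L[ℝ] C)

lemma pathLen_nonneg (w : ℝ → H) (c : ℝ → C) : 0 ≤ pathLen ω w c :=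
  intervalIntegral.integral_nonneg zero_le_one (fun _ _ => Real.sqrt_nonneg _)

lemma deriv_line (A : H) : deriv (fun s : ℝ => s • A) = fun _ => A := by
  funext s
  simpa using ((hasDerivAt_id s).smul_const A).deriv

lemma omega_self (hskew : ∀ A B : H, ω A B = - ω B A) (A : H) : ω A A = 0 := by
  have h := hskew A A
  have h2 : (2:ℝ) • ω A A = 0 := by rw [two_smul]; nth_rw 2 [h]; simp
  exact (smul_eq_zero.mp h2).resolve_left (by norm_num)

lemma norm_sub_le_integral (w : ℝ → H) (hw : ContDiff ℝ 1 w) :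
    ‖w 1 - w 0‖ ≤ ∫ s in (0:ℝ)..1, ‖deriv w s‖ := by
  have hw' : Continuous (deriv w) := hw.continuous_deriv le_rfl
  rcases eq_or_ne (w 1 - w 0) 0 with hv | hv
  · rw [hv, norm_zero]
    exact intervalIntegral.integral_nonneg zero_le_one (fun _ _ => norm_nonneg _)
  · set v := w 1 - w 0 with hvdef
    set u : H := ‖v‖⁻¹ • v with hudef
    have hu : ‖u‖ = 1 := by
      rw [hudef, norm_smul, norm_inv, norm_norm, inv_mul_cancel₀ (norm_ne_zero_iff.mpr hv)]
    have hfd : ∀ s : ℝ, HasDerivAt (fun t => (innerSL ℝ u) (w t))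
        ((innerSL ℝ u) (deriv w s)) s := fun s =>
      (innerSL ℝ u).hasFDerivAt.comp_hasDerivAt s ((hw.differentiable one_ne_zero s).hasDerivAt)
    have hint : IntervalIntegrable (fun s => (innerSL ℝ u) (deriv w s)) volume 0 1 :=
      ((innerSL ℝ u).continuous.comp hw').intervalIntegrable 0 1
    have hFTC : (∫ s in (0:ℝ)..1, (innerSL ℝ u) (deriv w s))
        = (innerSL ℝ u) (w 1) - (innerSL ℝ u) (w 0) :=
      intervalIntegral.integral_eq_sub_of_hasDerivAt (fun s _ => hfd s) hint
    have hval : (innerSL ℝ u) (w 1) - (innerSL ℝ u) (w 0) = ‖v‖ := by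
      have : (innerSL ℝ u) (w 1) - (innerSL ℝ u) (w 0) = inner ℝ u v := by
        simp [innerSL_apply_apply, hvdef, inner_sub_right]
      rw [this, hudef, real_inner_smul_left, real_inner_self_eq_norm_sq]
      have h0 : ‖v‖ ≠ 0 := norm_ne_zero_iff.mpr hv
      field_simp
    calc ‖v‖ = ∫ s in (0:ℝ)..1, (innerSL ℝ u) (deriv w s) := by rw [hFTC, hval]
      _ ≤ ∫ s in (0:ℝ)..1, ‖deriv w s‖ := by
          refine intervalIntegral.integral_mono_on zero_le_one hint
            (hw'.norm.intervalIntegrable 0 1) (fun s _ => ?_)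
          calc (innerSL ℝ u) (deriv w s) ≤ ‖u‖ * ‖deriv w s‖ := real_inner_le_norm u _
            _ = ‖deriv w s‖ := by rw [hu, one_mul]

lemma pathLen_ge (w : ℝ → H) (c : ℝ → C) (hw : ContDiff ℝ 1 w) (hc : ContDiff ℝ 1 c) :
    ‖w 1 - w 0‖ ≤ pathLen ω w c := by
  have hw' : Continuous (deriv w) := hw.continuous_deriv le_rfl
  have hc' : Continuous (deriv c) := hc.continuous_deriv le_rfl
  have hωc : Continuous fun s => ω (w s) (deriv w s) :=
    ω.continuous₂.comp₂ hw.continuous hw'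
  have hf : Continuous fun s =>
      Real.sqrt (‖deriv w s‖ ^ 2 + ‖deriv c s - (2:ℝ)⁻¹ • ω (w s) (deriv w s)‖ ^ 2) :=
    Real.continuous_sqrt.comp ((hw'.norm.pow 2).add
      (((hc'.sub (hωc.const_smul _)).norm.pow 2)))
  refine (norm_sub_le_integral w hw).trans ?_
  refine intervalIntegral.integral_mono_on zero_le_one
    (hw'.norm.intervalIntegrable 0 1) (hf.intervalIntegrable 0 1) (fun s _ => ?_)
  calc ‖deriv w s‖ = Real.sqrt (‖deriv w s‖ ^ 2) := (Real.sqrt_sq (norm_nonneg _)).symm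
    _ ≤ _ := Real.sqrt_le_sqrt (le_add_of_nonneg_right (by positivity))

lemma pathLen_horizontal (w : ℝ → H) (c : ℝ → C)
    (hhor : ∀ s ∈ Set.Icc (0:ℝ) 1, deriv c s = (2:ℝ)⁻¹ • ω (w s) (deriv w s)) :
    pathLen ω w c = ∫ s in (0:ℝ)..1, ‖deriv w s‖ := by
  refine intervalIntegral.integral_congr (fun s hs => ?_)
  rw [Set.uIcc_of_le zero_le_one] at hs
  rw [hhor s hs, sub_self, norm_zero]
  simp [Real.sqrt_sq (norm_nonneg _)]

end aux

/-- `δ(e,(A,a)) ≥ d(e,(A,a)) ≥ ‖A‖_H`, and `δ(e,(A,0)) = d(e,(A,0)) = ‖A‖_H`. -/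
theorem horizontal_dist_ge_dist_ge_norm
    {H C : Type*} [NormedAddCommGroup H] [InnerProductSpace ℝ H]
    [TopologicalSpace.SeparableSpace H]
    [NormedAddCommGroup C] [InnerProductSpace ℝ C] [FiniteDimensional ℝ C]
    (ω : H →L[ℝ] H →L[ℝ] C)
    (hskew : ∀ A B : H, ω A B = - ω B A) :
    ∀ (A : H) (a : C),
      ENNReal.ofReal (dCM ω ((0 : H), (0 : C)) (A, a)) ≤ dCC ω ((0 : H), (0 : C)) (A, a) ∧
      ‖A‖ ≤ dCM ω ((0 : H), (0 : C)) (A, a) ∧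
      dCC ω ((0 : H), (0 : C)) (A, (0 : C)) = ENNReal.ofReal ‖A‖ ∧
      dCM ω ((0 : H), (0 : C)) (A, (0 : C)) = ‖A‖ := by
  intro A a
  -- straight-line path
  have hw₀cd : ContDiff ℝ 1 (fun s : ℝ => s • A) := contDiff_id.smul contDiff_const
  have hc₀cd : ContDiff ℝ 1 (fun _ : ℝ => (0 : C)) := contDiff_const
  have hω0 : ∀ s : ℝ, ω ((fun s : ℝ => s • A) s) (deriv (fun s : ℝ => s • A) s) = 0 := by
    intro s
    rw [deriv_line]
    simp [omega_self ω hskew A]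
  have hhor₀ : ∀ s ∈ Set.Icc (0:ℝ) 1,
      deriv (fun _ : ℝ => (0 : C)) s
        = (2:ℝ)⁻¹ • ω ((fun s : ℝ => s • A) s) (deriv (fun s : ℝ => s • A) s) := by
    intro s _
    rw [hω0 s]
    simp
  have hint₀ : (∫ s in (0:ℝ)..1, ‖deriv (fun s : ℝ => s • A) s‖) = ‖A‖ := by
    rw [deriv_line]
    simp
  have hlen₀ : pathLen ω (fun s : ℝ => s • A) (fun _ : ℝ => (0 : C)) = ‖A‖ := by
    rw [pathLen_horizontal ω _ _ hhor₀, hint₀]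
  -- bddBelow and lower bound for the Riemannian set
  have hbdd : ∀ b : C, BddBelow {L : ℝ | ∃ w : ℝ → H, ∃ c : ℝ → C,
      ContDiff ℝ 1 w ∧ ContDiff ℝ 1 c ∧ w 0 = ((0:H),(0:C)).1 ∧ c 0 = ((0:H),(0:C)).2 ∧
      w 1 = ((A,b) : H × C).1 ∧ c 1 = ((A,b) : H × C).2 ∧ L = pathLen ω w c} := by
    intro b
    refine ⟨0, fun L hL => ?_⟩
    obtain ⟨w, c, _, _, _, _, _, _, rfl⟩ := hL
    exact pathLen_nonneg ω w c
  have hlow : ∀ b : C, ‖A‖ ≤ dCM ω ((0 : H), (0 : C)) (A, b) := by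
    intro b
    refine le_csInf ⟨pathLen ω (fun s : ℝ => s • A) (fun s : ℝ => s • b),
      (fun s : ℝ => s • A), (fun s : ℝ => s • b), hw₀cd,
      contDiff_id.smul contDiff_const, by simp, by simp, by simp, by simp, rfl⟩ ?_
    rintro L ⟨w, c, hw, hc, hw0, hc0, hw1, hc1, rfl⟩
    have := pathLen_ge ω w c hw hc
    rwa [hw1, hw0, sub_zero] at this
  -- part 1 : ofReal dCM ≤ dCC
  have h1 : ∀ b : C, ENNReal.ofReal (dCM ω ((0 : H), (0 : C)) (A, b))
      ≤ dCC ω ((0 : H), (0 : C)) (A, b) := by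
    intro b
    refine le_iInf fun w => le_iInf fun c => le_iInf fun hw => le_iInf fun hc =>
      le_iInf fun hhor => le_iInf fun hw0 => le_iInf fun hc0 => le_iInf fun hw1 =>
      le_iInf fun hc1 => ?_
    refine ENNReal.ofReal_le_ofReal ?_
    rw [← pathLen_horizontal ω w c hhor]
    exact csInf_le (hbdd b) ⟨w, c, hw, hc, hw0, hc0, hw1, hc1, rfl⟩
  refine ⟨h1 a, hlow a, ?_, ?_⟩
  · -- dCC (A,0) = ofReal ‖A‖
    refine le_antisymm ?_ ?_
    · refine iInf_le_of_le (fun s : ℝ => s • A) ?_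
      refine iInf_le_of_le (fun _ : ℝ => (0 : C)) ?_
      refine iInf_le_of_le hw₀cd ?_
      refine iInf_le_of_le hc₀cd ?_
      refine iInf_le_of_le hhor₀ ?_
      refine iInf_le_of_le (by simp) ?_
      refine iInf_le_of_le rfl ?_
      refine iInf_le_of_le (by simp) ?_
      refine iInf_le_of_le rfl ?_
      rw [hint₀]
    · refine le_trans ?_ (h1 0)
      exact ENNReal.ofReal_le_ofReal (hlow 0)
  · -- dCM (A,0) = ‖A‖
    refine le_antisymm ?_ (hlow 0)
    refine csInf_le (hbdd 0) ⟨(fun s : ℝ => s • A), (fun _ : ℝ => (0 : C)),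
      hw₀cd, hc₀cd, by simp, rfl, by simp, rfl, hlen₀.symm⟩
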